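/- Let I be a finite set with |I| = n ≥ 2. The image of q_*p^* : ℤ[𝒫(I)] → ℤ[Par(I)] is a free abelian group of rank 2^n − n − 1. -/

import Mathlib

noncomputable section
open Classical

/-- A partition of a type `I`: a finite collection of nonempty pairwise disjoint
subsets covering `I`. -/
def IsPart {I : Type} (P : Finset (Finset I)) : Prop :=
  (∀ S ∈ P, S ≠ ∅) ∧ ∀ a : I, ∃! S, S ∈ P ∧ a ∈ S

/-- `Par(I)`: the partitions of `I` into at least two nonempty blocks. -/
abbrev Pars (I : Type) [Fintype I] [DecidableEq I] : Type :=
  {P : Finset (Finset I) // IsPart P ∧ 2 ≤ P.card}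

/-- `𝒫(I)`: the nonempty proper subsets of `I`. -/
abbrev Psets (I : Type) [Fintype I] [DecidableEq I] : Type :=
  {S : Finset I // S ≠ ∅ ∧ S ≠ Finset.univ}

/-- The map `q_* p^* : ℤ[𝒫(I)] → ℤ[Par(I)]`, `(q_* p^* k)(P) = ∑_{S ∈ P} k(S)`. -/
def qp {I : Type} [Fintype I] [DecidableEq I] (k : Psets I → ℤ) : Pars I → ℤ :=
  fun P => ∑ S ∈ Finset.univ.filter (fun S : Psets I => S.1 ∈ P.1), k S

/-- The map `p_* q^* : ℤ[Par(I)] → ℤ[𝒫(I)]`, `(p_* q^* m)(S) = ∑_{P ∋ S} m(P)`. -/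
def pq {I : Type} [Fintype I] [DecidableEq I] (m : Pars I → ℤ) : Psets I → ℤ :=
  fun S => ∑ P ∈ Finset.univ.filter (fun P : Pars I => S.1 ∈ P.1), m P

/-- The map `q_* p^*` as a homomorphism of abelian groups. -/
def qpHom (I : Type) [Fintype I] [DecidableEq I] : (Psets I → ℤ) →+ (Pars I → ℤ) where
  toFun := qp
  map_zero' := by
    funext P
    simp [qp]
  map_add' := by
    intro k l
    funext P
    simp [qp, Finset.sum_add_distrib]

set_option linter.unusedSectionVars false
section Aux
variable {I : Type} [Fintype I] [DecidableEq I]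

/-- extension of `k` by zero to all finsets -/
def Kext (k : Psets I → ℤ) (S : Finset I) : ℤ :=
  if h : S ≠ ∅ ∧ S ≠ Finset.univ then k ⟨S, h⟩ else 0

lemma block_proper (P : Pars I) {S : Finset I} (hS : S ∈ P.1) :
    S ≠ ∅ ∧ S ≠ Finset.univ := by
  refine ⟨P.2.1.1 S hS, ?_⟩
  intro hSu
  obtain ⟨T, hT, hTS⟩ : ∃ T ∈ P.1, T ≠ S := by
    by_contra h
    push_neg at h
    have hsub : P.1 ⊆ {S} := fun T hT => Finset.mem_singleton.2 (h T hT)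
    have h1 := Finset.card_le_card hsub
    have h2 := P.2.2
    simp at h1
    omega
  obtain ⟨a, ha⟩ := Finset.nonempty_of_ne_empty (P.2.1.1 T hT)
  have haS : a ∈ S := hSu ▸ Finset.mem_univ a
  obtain ⟨U, _, hUuniq⟩ := P.2.1.2 a
  exact hTS ((hUuniq T ⟨hT, ha⟩).trans (hUuniq S ⟨hS, haS⟩).symm)

lemma qp_eq (k : Psets I → ℤ) (P : Pars I) : qp k P = ∑ S ∈ P.1, Kext k S := by
  rw [qp]
  refine Finset.sum_bij' (fun S _ => (S : Psets I).1)
    (fun S hS => (⟨S, block_proper P hS⟩ : Psets I)) ?_ ?_ ?_ ?_ ?_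
  · intro a ha
    exact (Finset.mem_filter.mp ha).2
  · intro S hS
    simp [Finset.mem_filter]
    exact hS
  · intro a ha; rfl
  · intro S hS; rfl
  · intro a ha
    rw [Kext, dif_pos a.2]

lemma compl_ne_empty {S : Finset I} (h : S ≠ Finset.univ) : Sᶜ ≠ ∅ := by
  intro hc
  apply h
  rwa [Finset.compl_eq_empty_iff] at hc

def parPair (S : Finset I) (h1 : S ≠ ∅) (h2 : S ≠ Finset.univ) : Pars I := by
  refine ⟨{S, Sᶜ}, ⟨⟨?_, ?_⟩, ?_⟩⟩
  · intro T hT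
    rcases Finset.mem_insert.mp hT with rfl | hT
    · exact h1
    · rw [Finset.mem_singleton] at hT
      subst hT
      exact compl_ne_empty h2
  · intro a
    by_cases ha : a ∈ S
    · refine ⟨S, ⟨by simp, ha⟩, ?_⟩
      rintro T ⟨hT, haT⟩
      rcases Finset.mem_insert.mp hT with rfl | hT
      · rfl
      · rw [Finset.mem_singleton] at hT; subst hT
        exact absurd ha (Finset.mem_compl.mp haT)
    · refine ⟨Sᶜ, ⟨by simp, Finset.mem_compl.mpr ha⟩, ?_⟩
      rintro T ⟨hT, haT⟩
      rcases Finset.mem_insert.mp hT with rfl | hT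
      · exact absurd haT ha
      · rw [Finset.mem_singleton] at hT; subst hT; rfl
  · rw [Finset.card_pair]
    obtain ⟨a, ha⟩ := Finset.nonempty_of_ne_empty h1
    intro hSc
    exact (Finset.mem_compl.mp (hSc ▸ ha)) ha

lemma qp_parPair (k : Psets I → ℤ) (S : Finset I) (h1 : S ≠ ∅) (h2 : S ≠ Finset.univ) :
    qp k (parPair S h1 h2) = Kext k S + Kext k Sᶜ := by
  rw [qp_eq]
  apply Finset.sum_pair
  obtain ⟨a, ha⟩ := Finset.nonempty_of_ne_empty h1
  intro hSc
  exact (Finset.mem_compl.mp (hSc ▸ ha)) ha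

lemma triple_AB {S : Finset I} {i : I} : S.erase i ≠ {i} := by
  intro h
  exact Finset.notMem_erase i S (h ▸ Finset.mem_singleton_self i)

lemma triple_AC {S : Finset I} {i : I} (hA : (S.erase i).Nonempty) : S.erase i ≠ Sᶜ := by
  obtain ⟨j, hj⟩ := hA
  intro h
  exact (Finset.mem_compl.mp (h ▸ hj)) (Finset.mem_of_mem_erase hj)

lemma triple_BC {S : Finset I} {i : I} (hi : i ∈ S) : ({i} : Finset I) ≠ Sᶜ := by
  intro h
  exact (Finset.mem_compl.mp (h ▸ Finset.mem_singleton_self i)) hi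

def parTriple (S : Finset I) {i : I} (hi : i ∈ S) (hA : (S.erase i).Nonempty)
    (h2 : S ≠ Finset.univ) : Pars I := by
  have hAB : S.erase i ≠ {i} := triple_AB
  have hAC : S.erase i ≠ Sᶜ := triple_AC hA
  have hBC : ({i} : Finset I) ≠ Sᶜ := triple_BC hi
  refine ⟨{S.erase i, {i}, Sᶜ}, ⟨⟨?_, ?_⟩, ?_⟩⟩
  · intro T hT
    simp only [Finset.mem_insert, Finset.mem_singleton] at hT
    rcases hT with rfl | rfl | rfl
    · exact Finset.nonempty_iff_ne_empty.mp hA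
    · simp
    · exact compl_ne_empty h2
  · intro a
    by_cases haS : a ∈ S
    · by_cases hai : a = i
      · subst hai
        refine ⟨{a}, ⟨by simp, Finset.mem_singleton_self a⟩, ?_⟩
        rintro T ⟨hT, haT⟩
        simp only [Finset.mem_insert, Finset.mem_singleton] at hT
        rcases hT with rfl | rfl | rfl
        · exact absurd (Finset.ne_of_mem_erase haT) (by simp)
        · rfl
        · exact absurd haS (Finset.mem_compl.mp haT)
      · refine ⟨S.erase i, ⟨by simp, Finset.mem_erase.mpr ⟨hai, haS⟩⟩, ?_⟩
        rintro T ⟨hT, haT⟩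
        simp only [Finset.mem_insert, Finset.mem_singleton] at hT
        rcases hT with rfl | rfl | rfl
        · rfl
        · exact absurd (Finset.mem_singleton.mp haT) hai
        · exact absurd haS (Finset.mem_compl.mp haT)
    · refine ⟨Sᶜ, ⟨by simp, Finset.mem_compl.mpr haS⟩, ?_⟩
      rintro T ⟨hT, haT⟩
      simp only [Finset.mem_insert, Finset.mem_singleton] at hT
      rcases hT with rfl | rfl | rfl
      · exact absurd (Finset.mem_of_mem_erase haT) haS
      · exact absurd (Finset.mem_singleton.mp haT ▸ hi) haS
      · rfl
  · rw [Finset.card_insert_of_notMem (by simp [hAB, hAC]),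
      Finset.card_insert_of_notMem (by simp [hBC]), Finset.card_singleton]
    omega

lemma qp_parTriple (k : Psets I → ℤ) (S : Finset I) {i : I} (hi : i ∈ S)
    (hA : (S.erase i).Nonempty) (h2 : S ≠ Finset.univ) :
    qp k (parTriple S hi hA h2) = Kext k (S.erase i) + Kext k {i} + Kext k Sᶜ := by
  have hAB : S.erase i ≠ {i} := triple_AB
  have hAC : S.erase i ≠ Sᶜ := triple_AC hA
  have hBC : ({i} : Finset I) ≠ Sᶜ := triple_BC hi
  have hval : (parTriple S hi hA h2).1 = {S.erase i, {i}, Sᶜ} := rfl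
  rw [qp_eq, hval]
  rw [Finset.sum_insert (by simp [hAB, hAC]), Finset.sum_insert (by simp [hBC]),
    Finset.sum_singleton, add_assoc]

lemma ksum (k : Psets I → ℤ) (hk : ∀ P : Pars I, qp k P = 0) :
    ∀ S : Finset I, S ≠ ∅ → S ≠ Finset.univ → Kext k S = ∑ i ∈ S, Kext k {i} := by
  intro S
  induction S using Finset.strongInduction with
  | _ S ih =>
    intro h1 h2
    rcases Nat.lt_or_ge S.card 2 with hc | hc
    · have hc1 : S.card = 1 := by
        have := Finset.card_pos.mpr (Finset.nonempty_of_ne_empty h1)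
        omega
      obtain ⟨i, rfl⟩ := Finset.card_eq_one.mp hc1
      simp
    · obtain ⟨i, hi⟩ := Finset.nonempty_of_ne_empty h1
      have hA : (S.erase i).Nonempty := by
        rw [← Finset.card_pos, Finset.card_erase_of_mem hi]
        omega
      have e1 := hk (parPair S h1 h2)
      rw [qp_parPair] at e1
      have e2 := hk (parTriple S hi hA h2)
      rw [qp_parTriple] at e2
      have hAe : S.erase i ≠ ∅ := Finset.nonempty_iff_ne_empty.mp hA
      have hAu : S.erase i ≠ Finset.univ := by
        intro h
        apply h2
        apply Finset.eq_univ_of_forall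
        intro a
        exact Finset.mem_of_mem_erase (h ▸ Finset.mem_univ a)
      have ihA := ih (S.erase i) (Finset.erase_ssubset hi) hAe hAu
      have : Kext k S = Kext k (S.erase i) + Kext k {i} := by omega
      rw [this, ihA, ← Finset.sum_erase_add S _ hi]

lemma ktotal (k : Psets I → ℤ) (hI : 2 ≤ Fintype.card I)
    (hk : ∀ P : Pars I, qp k P = 0) : ∑ i : I, Kext k {i} = 0 := by
  have : Nonempty I := by
    rw [← Fintype.card_pos_iff]; omega
  obtain ⟨i0⟩ := this
  have hs1 : ({i0} : Finset I) ≠ ∅ := by simp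
  have hs2 : ({i0} : Finset I) ≠ Finset.univ := by
    intro h
    have := Finset.card_univ (α := I)
    rw [← h] at this
    simp at this
    omega
  have e1 := hk (parPair {i0} hs1 hs2)
  rw [qp_parPair] at e1
  have hc1 : ({i0}ᶜ : Finset I) ≠ ∅ := compl_ne_empty hs2
  have hc2 : ({i0}ᶜ : Finset I) ≠ Finset.univ := by
    intro h
    have : i0 ∈ ({i0}ᶜ : Finset I) := h ▸ Finset.mem_univ i0
    simp at this
  rw [ksum k hk _ hc1 hc2] at e1
  rw [← Finset.sum_add_sum_compl {i0}]
  simpa using e1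

/-- summation functional -/
def sumHom : (I → ℤ) →ₗ[ℤ] ℤ where
  toFun c := ∑ i, c i
  map_add' c d := by simp [Finset.sum_add_distrib]
  map_smul' z c := by simp [Finset.mul_sum]

/-- additive extension map -/
def Phi : (I → ℤ) →ₗ[ℤ] (Psets I → ℤ) where
  toFun c := fun S => ∑ i ∈ S.1, c i
  map_add' c d := by funext S; simp [Finset.sum_add_distrib]
  map_smul' z c := by funext S; simp [Finset.mul_sum]

lemma Phi_injective (hI : 2 ≤ Fintype.card I) : Function.Injective (Phi (I := I)) := by
  rw [injective_iff_map_eq_zero]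
  intro c hc
  funext i
  have hs2 : ({i} : Finset I) ≠ Finset.univ := by
    intro h
    have := Finset.card_univ (α := I)
    rw [← h] at this
    simp at this
    omega
  have h0 := congrFun hc ⟨{i}, by simp, hs2⟩
  have h1 : ∑ j ∈ ({i} : Finset I), c j = 0 := h0
  simpa using h1

lemma ker_eq (hI : 2 ≤ Fintype.card I) :
    LinearMap.ker ((qpHom I).toIntLinearMap) =
      (LinearMap.ker (sumHom (I := I))).map (Phi (I := I)) := by
  ext k
  simp only [LinearMap.mem_ker, Submodule.mem_map]
  constructor
  · intro hfk
    have hk : ∀ P : Pars I, qp k P = 0 := fun P => congrFun hfk P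
    refine ⟨fun i => Kext k {i}, ?_, ?_⟩
    · exact ktotal k hI hk
    · funext S
      show ∑ i ∈ S.1, Kext k {i} = k S
      rw [← ksum k hk S.1 S.2.1 S.2.2, Kext, dif_pos S.2]
  · rintro ⟨c, hc, rfl⟩
    funext P
    show qp (Phi c) P = 0
    rw [qp_eq]
    have hdisj : (P.1 : Set (Finset I)).PairwiseDisjoint id := by
      intro S hS T hT hST
      show Disjoint S T
      rw [Finset.disjoint_left]
      intro a haS haT
      obtain ⟨U, _, hU⟩ := P.2.1.2 a
      exact hST ((hU S ⟨hS, haS⟩).trans (hU T ⟨hT, haT⟩).symm)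
    have hcov : P.1.biUnion id = Finset.univ := by
      apply Finset.eq_univ_of_forall
      intro a
      obtain ⟨S, ⟨hS, haS⟩, _⟩ := P.2.1.2 a
      exact Finset.mem_biUnion.mpr ⟨S, hS, haS⟩
    calc ∑ S ∈ P.1, Kext (Phi c) S = ∑ S ∈ P.1, ∑ i ∈ S, c i := by
          apply Finset.sum_congr rfl
          intro S hS
          rw [Kext, dif_pos (block_proper P hS)]
          rfl
      _ = ∑ i ∈ P.1.biUnion id, c i := (Finset.sum_biUnion hdisj).symm
      _ = ∑ i, c i := by rw [hcov]
      _ = 0 := hc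

lemma card_psets (hI : 2 ≤ Fintype.card I) :
    Fintype.card (Psets I) = 2 ^ Fintype.card I - 2 := by
  have hne : (∅ : Finset I) ≠ Finset.univ := by
    intro h
    have := Finset.card_univ (α := I)
    rw [← h] at this
    simp at this
    omega
  rw [Fintype.card_subtype]
  have hfe : Finset.univ.filter (fun S : Finset I => S ≠ ∅ ∧ S ≠ Finset.univ) =
      Finset.univ \ {∅, Finset.univ} := by
    ext S
    simp [not_or]
  rw [hfe, Finset.card_sdiff_of_subset (by simp)]
  rw [Finset.card_univ, Fintype.card_finset, Finset.card_pair hne]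
end Aux

set_option synthInstance.maxHeartbeats 1000000 in
set_option maxHeartbeats 1000000 in
theorem image_qp_free_of_rank (I : Type) [Fintype I] [DecidableEq I]
    (hI : 2 ≤ Fintype.card I) :
    Nonempty ((qpHom I).range ≃+
      (Fin (2 ^ Fintype.card I - Fintype.card I - 1) → ℤ)) := by
  set n := Fintype.card I with hn
  set f := (qpHom I).toIntLinearMap with hf
  have hpow : n < 2 ^ n := Nat.lt_two_pow_self
  -- finrank of the domain
  have hM : Module.finrank ℤ (Psets I → ℤ) = 2 ^ n - 2 := by
    rw [Module.finrank_pi, card_psets hI]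
  -- finrank of ker sumHom
  have hsurj : Function.Surjective (sumHom (I := I)) := by
    intro z
    have : Nonempty I := by rw [← Fintype.card_pos_iff]; omega
    obtain ⟨i0⟩ := this
    refine ⟨Pi.single i0 z, ?_⟩
    show ∑ i, Pi.single i0 z i = z
    simp
  have hWq : Module.finrank ℤ ((I → ℤ) ⧸ LinearMap.ker (sumHom (I := I))) = 1 := by
    rw [LinearEquiv.finrank_eq (sumHom (I := I)).quotKerEquivRange,
      LinearMap.range_eq_top.mpr hsurj, finrank_top, Module.finrank_self]
  have hWa := Submodule.finrank_quotient_add_finrank (R := ℤ) (LinearMap.ker (sumHom (I := I)))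
  have hIZ : Module.finrank ℤ (I → ℤ) = n := by rw [Module.finrank_pi]
  have hW : Module.finrank ℤ (LinearMap.ker (sumHom (I := I))) = n - 1 := by omega
  -- finrank of ker f
  have hker : Module.finrank ℤ (LinearMap.ker f) = n - 1 := by
    rw [hf, ker_eq hI,
      ← LinearEquiv.finrank_eq (Submodule.equivMapOfInjective _ (Phi_injective hI)
        (LinearMap.ker (sumHom (I := I))))]
    exact hW
  -- finrank of range f
  have hq := Submodule.finrank_quotient_add_finrank (R := ℤ) (LinearMap.ker f)
  have hqr := LinearEquiv.finrank_eq f.quotKerEquivRange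
  have hrange : Module.finrank ℤ (LinearMap.range f) = 2 ^ n - n - 1 := by omega
  -- build the equivalence
  have hbcard : Fintype.card (Module.Free.ChooseBasisIndex ℤ (LinearMap.range f))
      = 2 ^ n - n - 1 := by
    rw [← Module.finrank_eq_card_chooseBasisIndex]
    exact hrange
  let b := (Module.Free.chooseBasis ℤ (LinearMap.range f)).reindex
    (Fintype.equivFinOfCardEq hbcard)
  let e2 := b.equivFun
  have e0 : (qpHom I).range ≃+ LinearMap.range f :=
    { toFun := fun x => ⟨x.1, by obtain ⟨y, hy⟩ := x.2; exact ⟨y, hy⟩⟩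
      invFun := fun x => ⟨x.1, by obtain ⟨y, hy⟩ := x.2; exact ⟨y, hy⟩⟩
      left_inv := fun x => rfl
      right_inv := fun x => rfl
      map_add' := fun x y => rfl }
  exact ⟨e0.trans e2.toAddEquiv⟩
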